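/- With the matrix units E_{jk} = V_jV_k* built from partial isometries in 𝔑₂ as above, and 𝔑₁, 𝔑₂ commuting Schlieder-independent von Neumann algebras, the *-homomorphism α([A_{jk}]) = Σ_{j,k} A_{jk}E_{jk} is isometric on each matrix entry: ‖A_{jk}‖ = ‖E_{jj} α([A]) E_{kk}‖ ≤ ‖α([A])‖ for all [A] ∈ Mₙ(𝔑₁). -/

import Mathlib

open Matrix

section Auxiliary

variable {H : Type*} [NormedAddCommGroup H] [InnerProductSpace ℂ H] [CompleteSpace H]

/-- Anything commuting with a selfadjoint operator commutes with its continuous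
functional calculus. -/
theorem commute_cfc_of_commute (T B : H →L[ℂ] H) (hT : IsSelfAdjoint T) (hBT : Commute B T)
    (f : ℝ → ℝ) : Commute B (cfc f T) := by
  by_cases hf : ContinuousOn f (spectrum ℝ T)
  · rw [cfc_apply f T hT hf]
    set s := spectrum ℝ T
    have key : ∀ g : C(s, ℝ), Commute B (cfcHom hT g) := by
      intro g
      induction g using ContinuousMap.induction_on_of_compact with
      | const r =>
        have : (ContinuousMap.const s r) = algebraMap ℝ C(s, ℝ) r := rfl
        rw [this, AlgHomClass.commutes]
        exact Algebra.commute_algebraMap_right r B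
      | id => rw [cfcHom_id hT]; exact hBT
      | star_id => rw [star_trivial, cfcHom_id hT]; exact hBT
      | add f g hf hg => rw [_root_.map_add]; exact hf.add_right hg
      | mul f g hf hg => rw [_root_.map_mul]; exact hf.mul_right hg
      | frequently g hg =>
        have hcl : IsClosed {x : C(s, ℝ) | Commute B (cfcHom hT x)} := by
          have : IsClosed {y : H →L[ℂ] H | Commute B y} :=
            isClosed_eq (continuous_const.mul continuous_id) (continuous_id.mul continuous_const)
          exact this.preimage (cfcHom_isClosedEmbedding hT).continuous
        exact hcl.closure_subset (mem_closure_iff_frequently.mpr hg)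
    exact key _
  · rw [cfc_apply_of_not_continuousOn T hf]
    exact Commute.zero_right B

/-- A von Neumann algebra is closed under the real continuous functional calculus of its
selfadjoint elements. -/
theorem cfc_mem_vonNeumannAlgebra (N : VonNeumannAlgebra H) {T : H →L[ℂ] H} (hT : T ∈ N)
    (hsa : IsSelfAdjoint T) (f : ℝ → ℝ) : cfc f T ∈ N := by
  have : cfc f T ∈ Set.centralizer (Set.centralizer (N : Set (H →L[ℂ] H))) := by
    rw [Set.mem_centralizer_iff]
    intro B hB
    exact (commute_cfc_of_commute T B hsa (hB T hT).symm f).eq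
  rwa [N.centralizer_centralizer] at this

/-- Schlieder independence upgrades to norm multiplicativity against nonzero projections:
for `0 ≤ T` in `N₁` and a nonzero projection `P` in `N₂`, `‖T * P‖ = ‖T‖`. -/
theorem norm_nonneg_mul_proj [Nontrivial (H →L[ℂ] H)] (N₁ N₂ : VonNeumannAlgebra H)
    (hcomm : ∀ a ∈ N₁, ∀ b ∈ N₂, a * b = b * a)
    (hSch : ∀ a ∈ N₁, ∀ b ∈ N₂, a ≠ 0 → b ≠ 0 → a * b ≠ 0)
    {T P : H →L[ℂ] H} (hT : T ∈ N₁) (hTnn : 0 ≤ T) (hP : P ∈ N₂)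
    (hPi : IsIdempotentElem P) (hPsa : IsSelfAdjoint P) (hPne : P ≠ 0) :
    ‖T * P‖ = ‖T‖ := by
  have hTsa : IsSelfAdjoint T := .of_nonneg hTnn
  have hPnorm : ‖P‖ ≤ 1 := by
    have h1 : ‖star P * P‖ = ‖P‖ * ‖P‖ := CStarRing.norm_star_mul_self
    rw [hPsa.star_eq, hPi.eq] at h1
    nlinarith [norm_nonneg P]
  refine le_antisymm ?_ ?_
  · calc ‖T * P‖ ≤ ‖T‖ * ‖P‖ := norm_mul_le T P
    _ ≤ ‖T‖ * 1 := mul_le_mul_of_nonneg_left hPnorm (norm_nonneg T)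
    _ = ‖T‖ := mul_one _
  · refine le_of_forall_pos_le_add fun ε hε => ?_
    rw [← sub_le_iff_le_add]
    set c : ℝ := ‖T‖ - ε with hc
    set f : ℝ → ℝ := fun t => max (t - c) 0 with hf
    have hfc : Continuous f := (continuous_id.sub continuous_const).max continuous_const
    set S : H →L[ℂ] H := cfc f T with hS
    have hSsa : IsSelfAdjoint S := cfc_predicate f T
    have hSmem : S ∈ N₁ := cfc_mem_vonNeumannAlgebra N₁ hT hTsa f
    have hSne : S ≠ 0 := by
      intro h0
      have hspec : ‖T‖ ∈ spectrum ℝ T := CStarAlgebra.norm_mem_spectrum_of_nonneg hTnn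
      have := norm_apply_le_norm_cfc f T hspec (hfc.continuousOn) hTsa
      rw [← hS, h0, norm_zero] at this
      have hfT : f ‖T‖ = ε := by
        simp only [hf, hc, sub_sub_cancel]
        exact max_eq_left hε.le
      rw [hfT, Real.norm_eq_abs, abs_of_pos hε] at this
      linarith
    have hSP_ne : S * P ≠ 0 := hSch S hSmem P hP hSne hPne
    obtain ⟨x, hx⟩ : ∃ x, (S * P) x ≠ 0 := by
      by_contra h
      push_neg at h
      exact hSP_ne (ContinuousLinearMap.ext fun x => by simpa using h x)
    have hD : 0 ≤ cfc (fun t => f t * (t * f t) - c * (f t * f t)) T := by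
      apply cfc_nonneg
      intro t _
      rcases le_or_gt t c with h | h
      · have : f t = 0 := by simp [hf]; linarith
        simp [this]
      · have : f t = t - c := by simp [hf]; linarith
        rw [this]; nlinarith
    have hDeq : cfc (fun t => f t * (t * f t) - c * (f t * f t)) T
        = S * (T * S) - c • (S * S) := by
      rw [cfc_sub _ _ T, cfc_const_mul _ _ T, cfc_mul _ _ T, cfc_mul _ _ T, cfc_mul _ _ T,
        cfc_id' ℝ T]
    rw [hDeq] at hD
    have hpos : (S * (T * S) - c • (S * S)).IsPositive :=
      (ContinuousLinearMap.nonneg_iff_isPositive _).mp hD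
    have hSP : S * P = P * S := hcomm S hSmem P hP
    have hadj : ContinuousLinearMap.adjoint S = S := by
      rw [← ContinuousLinearMap.star_eq_adjoint]; exact hSsa.star_eq
    set z : H := P x with hz
    set y : H := S z with hy
    have hyne : y ≠ 0 := by simpa [hy, hz, ContinuousLinearMap.mul_apply] using hx
    have hynorm : 0 < ‖y‖ := norm_pos_iff.mpr hyne
    have hinner := hpos.inner_nonneg_left z
    have hSTS : ((S * (T * S)) z) = S (T y) := by simp [ContinuousLinearMap.mul_apply, hy]
    have hre : RCLike.re (inner ℂ ((S * (T * S)) z) z : ℂ) = RCLike.re (inner ℂ (T y) y : ℂ) := by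
      rw [hSTS]
      have e1 : (inner ℂ (S (T y)) z : ℂ) = inner ℂ ((ContinuousLinearMap.adjoint S) (T y)) z := by
        rw [hadj]
      rw [e1, ContinuousLinearMap.adjoint_inner_left, ← hy]
    have hre2 : RCLike.re (inner ℂ ((c • (S * S)) z) z : ℂ) = c * ‖y‖ ^ 2 := by
      have h2 : (inner ℂ (S (S z)) z : ℂ) = inner ℂ (S z) (S z) := by
        have e1 : (inner ℂ (S (S z)) z : ℂ) = inner ℂ ((ContinuousLinearMap.adjoint S) (S z)) z := by
          rw [hadj]
        rw [e1, ContinuousLinearMap.adjoint_inner_left]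
      have harg : ((c • (S * S)) z) = ((c : ℂ)) • (S (S z)) := by
        rw [ContinuousLinearMap.smul_apply, RCLike.real_smul_eq_coe_smul (K := ℂ)]
        rfl
      rw [harg, inner_smul_left, h2, ← hy, Complex.conj_ofReal]
      rw [show (RCLike.re ((c : ℂ) * (inner ℂ y y : ℂ))) = c * RCLike.re (inner ℂ y y : ℂ) from
        RCLike.re_ofReal_mul c _, inner_self_eq_norm_sq]
    have hkey : c * ‖y‖ ^ 2 ≤ RCLike.re (inner ℂ (T y) y : ℂ) := by
      have : 0 ≤ RCLike.re (inner ℂ ((S * (T * S)) z) z : ℂ)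
          - RCLike.re (inner ℂ ((c • (S * S)) z) z : ℂ) := by
        simpa only [ContinuousLinearMap.sub_apply, inner_sub_left, map_sub] using (RCLike.nonneg_iff.mp hinner).1
      rw [hre, hre2] at this
      linarith
    have hTy : c * ‖y‖ ^ 2 ≤ ‖T y‖ * ‖y‖ := by
      calc c * ‖y‖ ^ 2 ≤ RCLike.re (inner ℂ (T y) y : ℂ) := hkey
      _ ≤ ‖(inner ℂ (T y) y : ℂ)‖ := RCLike.re_le_norm _
      _ ≤ ‖T y‖ * ‖y‖ := norm_inner_le_norm _ _
    have hcy : c * ‖y‖ ≤ ‖T y‖ := by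
      have := hTy
      rw [pow_two] at this
      nlinarith [hynorm]
    have hTPy : (T * P) y = T y := by
      have hPy : P y = y := by
        simp only [hy, hz]
        have h1 : P (S (P x)) = S (P (P x)) := by
          calc P (S (P x)) = (P * S) (P x) := rfl
          _ = (S * P) (P x) := by rw [← hSP]
          _ = S (P (P x)) := rfl
        rw [h1]
        congr 1
        calc P (P x) = (P * P) x := rfl
        _ = P x := by rw [hPi.eq]
      calc (T * P) y = T (P y) := rfl
      _ = T y := by rw [hPy]
    have : c * ‖y‖ ≤ ‖T * P‖ * ‖y‖ := by
      calc c * ‖y‖ ≤ ‖T y‖ := hcy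
      _ = ‖(T * P) y‖ := by rw [hTPy]
      _ ≤ ‖T * P‖ * ‖y‖ := ContinuousLinearMap.le_opNorm _ _
    have := le_of_mul_le_mul_right (by linarith : c * ‖y‖ ≤ ‖T * P‖ * ‖y‖) hynorm
    linarith [this]

/-- A partial isometry satisfies `W (W* W) = W`. -/
theorem pisom_cancel {W : H →L[ℂ] H} (h : IsIdempotentElem (star W * W)) :
    W * (star W * W) = W := by
  set P := star W * W with hP
  have hPsa : star P = P := by rw [hP, StarMul.star_mul, star_star]
  have key : star (W * P - W) * (W * P - W) = 0 := by
    have h1 : star (W * P - W) = P * star W - star W := by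
      rw [star_sub, StarMul.star_mul, hPsa]
    have expand : (P * star W - star W) * (W * P - W)
        = P * ((star W * W) * P) - P * (star W * W) - (star W * W) * P + (star W * W) := by
      noncomm_ring
    rw [h1, expand, ← hP]
    simp only [h.eq]
    abel
  have := (CStarRing.star_mul_self_eq_zero_iff (W * P - W)).mp key
  rwa [sub_eq_zero] at this

/-- For `A ∈ N₁` and `W ∈ N₂` a nonzero partial isometry, `‖A * W‖ = ‖A‖`. -/
theorem norm_mul_pisom [Nontrivial (H →L[ℂ] H)] (N₁ N₂ : VonNeumannAlgebra H)
    (hcomm : ∀ a ∈ N₁, ∀ b ∈ N₂, a * b = b * a)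
    (hSch : ∀ a ∈ N₁, ∀ b ∈ N₂, a ≠ 0 → b ≠ 0 → a * b ≠ 0)
    {A W : H →L[ℂ] H} (hA : A ∈ N₁) (hW : W ∈ N₂)
    (hWi : IsIdempotentElem (star W * W)) (hWne : star W * W ≠ 0) :
    ‖A * W‖ = ‖A‖ := by
  have hT : star A * A ∈ N₁ := mul_mem (star_mem hA) hA
  have hTnn : (0 : H →L[ℂ] H) ≤ star A * A := star_mul_self_nonneg A
  have hPmem : star W * W ∈ N₂ := mul_mem (star_mem hW) hW
  have hPsa : _root_.IsSelfAdjoint (star W * W) := IsSelfAdjoint.star_mul_self W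
  have hc1 : (star A * A) * star W = star W * (star A * A) :=
    hcomm _ hT _ (star_mem hW)
  have step1 : star (A * W) * (A * W) = (star A * A) * (star W * W) := by
    calc star (A * W) * (A * W) = star W * ((star A * A) * W) := by
          simp only [StarMul.star_mul, mul_assoc]
    _ = (star A * A) * (star W * W) := by rw [← mul_assoc, ← hc1, mul_assoc]
  have hnorm : ‖A * W‖ * ‖A * W‖ = ‖A‖ * ‖A‖ := by
    calc ‖A * W‖ * ‖A * W‖ = ‖star (A * W) * (A * W)‖ := CStarRing.norm_star_mul_self.symm
    _ = ‖(star A * A) * (star W * W)‖ := by rw [step1]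
    _ = ‖star A * A‖ := norm_nonneg_mul_proj N₁ N₂ hcomm hSch hT hTnn hPmem hWi hPsa hWne
    _ = ‖A‖ * ‖A‖ := CStarRing.norm_star_mul_self
  exact (mul_self_inj_of_nonneg (norm_nonneg _) (norm_nonneg _)).mp hnorm

omit [CompleteSpace H] in
theorem comm_shuffle {a m v : H →L[ℂ] H} (h : m * a = a * m) : a * (m * v) = m * (a * v) := by
  rw [← mul_assoc, ← h, mul_assoc]

end Auxiliary

/-- The map `α([A_{jk}]) = Σ_{j,k} A_{jk} E_{jk}` built from partial isometries `V j`
via the matrix units `E_{jk} = V j (V k)*`. -/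
noncomputable def alphaMap {H : Type*} [NormedAddCommGroup H] [InnerProductSpace ℂ H]
    [CompleteSpace H] {n : ℕ} (V : Fin n → (H →L[ℂ] H))
    (M : Matrix (Fin n) (Fin n) (H →L[ℂ] H)) : H →L[ℂ] H :=
  ∑ j, ∑ k, M j k * (V j * star (V k))

/-- With matrix units `E_{jk} = V_j V_k*` built from partial isometries in `𝔑₂`, and
`𝔑₁, 𝔑₂` commuting Schlieder-independent von Neumann algebras, the *-homomorphism `α`
is isometric on each matrix entry:
`‖A_{jk}‖ = ‖E_{jj} α([A]) E_{kk}‖ ≤ ‖α([A])‖`. -/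
theorem alphaMap_entry_isometric {H : Type*} [NormedAddCommGroup H]
    [InnerProductSpace ℂ H] [CompleteSpace H]
    (N₁ N₂ : VonNeumannAlgebra H)
    (hcomm : ∀ a ∈ N₁, ∀ b ∈ N₂, a * b = b * a)
    (hSch : ∀ a ∈ N₁, ∀ b ∈ N₂, a ≠ 0 → b ≠ 0 → a * b ≠ 0)
    (n : ℕ) (V : Fin n → (H →L[ℂ] H))
    (hV : ∀ i, V i ∈ N₂)
    (hiso : ∀ i j, star (V i) * V i = star (V j) * V j)
    (hproj : ∀ i, IsIdempotentElem (star (V i) * V i) ∧ IsSelfAdjoint (star (V i) * V i))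
    (hne : ∀ i, star (V i) * V i ≠ 0)
    (horth : ∀ i j, i ≠ j → (V i * star (V i)) * (V j * star (V j)) = 0) :
    ∀ M : Matrix (Fin n) (Fin n) (H →L[ℂ] H), (∀ j k, M j k ∈ N₁) →
      ∀ j k, ‖M j k‖ = ‖(V j * star (V j)) * alphaMap V M * (V k * star (V k))‖ ∧
        ‖M j k‖ ≤ ‖alphaMap V M‖ := by
  intro M hM j k
  haveI : Nontrivial (H →L[ℂ] H) := nontrivial_of_ne _ _ (hne k)
  set E : Fin n → (H →L[ℂ] H) := fun i => V i * star (V i) with hE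
  have sVV : ∀ i, V i * (star (V i) * V i) = V i := fun i => pisom_cancel (hproj i).1
  have hEsa : ∀ i, _root_.IsSelfAdjoint (E i) := fun i => IsSelfAdjoint.mul_star_self (V i)
  have hEidem : ∀ i, IsIdempotentElem (E i) := by
    intro i
    show E i * E i = E i
    calc (V i * star (V i)) * (V i * star (V i))
        = (V i * (star (V i) * V i)) * star (V i) := by noncomm_ring
    _ = V i * star (V i) := by rw [sVV]
  have hEmem : ∀ i, E i ∈ N₂ := fun i => mul_mem (hV i) (star_mem (hV i))
  have hVne : ∀ i, V i ≠ 0 := fun i h => hne i (by simp [h])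
  have hEne : ∀ i, E i ≠ 0 := by
    intro i h
    have h1 : ‖V i * star (V i)‖ = ‖V i‖ * ‖V i‖ := CStarRing.norm_self_mul_star
    rw [show V i * star (V i) = E i from rfl, h, norm_zero] at h1
    exact hVne i (norm_eq_zero.mp (by nlinarith [norm_nonneg (V i)]))
  have hEVeq : ∀ i, E i * V i = V i := by
    intro i
    calc (V i * star (V i)) * V i = V i * (star (V i) * V i) := mul_assoc _ _ _
    _ = V i := sVV i
  have hEV : ∀ p q, p ≠ q → E p * V q = 0 := by
    intro p q hpq
    have h1 : E p * (E q * V q) = 0 := by rw [← mul_assoc, horth p q hpq, zero_mul]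
    rwa [hEVeq q] at h1
  have hVEeq : ∀ i, star (V i) * E i = star (V i) := by
    intro i
    have := congrArg star (hEVeq i)
    rwa [StarMul.star_mul, (hEsa i).star_eq] at this
  have hVE : ∀ p q, p ≠ q → star (V q) * E p = 0 := by
    intro p q hpq
    have := congrArg star (hEV p q hpq)
    rwa [StarMul.star_mul, (hEsa p).star_eq, star_zero] at this
  -- The compression identity
  have hcompress : E j * alphaMap V M * E k = M j k * (V j * star (V k)) := by
    rw [alphaMap]
    simp only [Finset.mul_sum, Finset.sum_mul]
    rw [Finset.sum_eq_single_of_mem j (Finset.mem_univ j)]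
    · rw [Finset.sum_eq_single_of_mem k (Finset.mem_univ k)]
      · rw [comm_shuffle (hcomm (M j k) (hM j k) (E j) (hEmem j))]
        rw [show E j * (V j * star (V k)) = (E j * V j) * star (V k) from (mul_assoc _ _ _).symm]
        rw [hEVeq j, mul_assoc, mul_assoc]
        rw [show star (V k) * E k = star (V k) from hVEeq k]
      · intro q _ hqk
        rw [comm_shuffle (hcomm (M j q) (hM j q) (E j) (hEmem j))]
        rw [show E j * (V j * star (V q)) = (E j * V j) * star (V q) from (mul_assoc _ _ _).symm,
          hEVeq j, mul_assoc, mul_assoc]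
        rw [show star (V q) * E k = 0 from hVE k q (Ne.symm hqk), mul_zero, mul_zero]
    · intro p _ hpj
      apply Finset.sum_eq_zero
      intro q _
      rw [comm_shuffle (hcomm (M p q) (hM p q) (E j) (hEmem j))]
      rw [show E j * (V p * star (V q)) = (E j * V p) * star (V q) from (mul_assoc _ _ _).symm]
      rw [hEV j p (fun h => hpj h.symm), zero_mul, mul_zero, zero_mul]
  -- The norm identity for a single matrix unit
  have hWW : star (V j * star (V k)) * (V j * star (V k)) = E k := by
    calc star (V j * star (V k)) * (V j * star (V k))
        = V k * ((star (V j) * V j) * star (V k)) := by simp only [StarMul.star_mul, star_star, mul_assoc]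
    _ = V k * ((star (V k) * V k) * star (V k)) := by rw [hiso j k]
    _ = (V k * (star (V k) * V k)) * star (V k) := by simp only [mul_assoc]
    _ = E k := by rw [sVV k]
  have hnorm : ‖M j k * (V j * star (V k))‖ = ‖M j k‖ := by
    apply norm_mul_pisom N₁ N₂ hcomm hSch (hM j k)
      (mul_mem (hV j) (star_mem (hV k)))
    · rw [hWW]; exact hEidem k
    · rw [hWW]; exact hEne k
  have hmain : ‖M j k‖ = ‖E j * alphaMap V M * E k‖ := by
    rw [hcompress, hnorm]
  have hEnorm : ∀ i, ‖E i‖ ≤ 1 := by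
    intro i
    have h1 : ‖star (E i) * E i‖ = ‖E i‖ * ‖E i‖ := CStarRing.norm_star_mul_self
    rw [(hEsa i).star_eq, (hEidem i).eq] at h1
    nlinarith [norm_nonneg (E i)]
  refine ⟨hmain, ?_⟩
  rw [hmain]
  calc ‖E j * alphaMap V M * E k‖ ≤ ‖E j * alphaMap V M‖ * ‖E k‖ := norm_mul_le _ _
  _ ≤ (‖E j‖ * ‖alphaMap V M‖) * ‖E k‖ :=
      mul_le_mul_of_nonneg_right (norm_mul_le _ _) (norm_nonneg _)
  _ ≤ (1 * ‖alphaMap V M‖) * 1 := by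
      have := hEnorm j
      have := hEnorm k
      have := norm_nonneg (alphaMap V M)
      have h0 : (0:ℝ) ≤ ‖E j‖ := norm_nonneg _
      nlinarith [norm_nonneg (E k), mul_nonneg h0 (norm_nonneg (alphaMap V M))]
  _ = ‖alphaMap V M‖ := by ring
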